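/- (Theorem 3) Let (X,P) be a rationalizable system of choice probabilities. Every rationalizing distribution has the same support if and only if (X,P) has a unique rationalizing distribution. Equivalently: if there exist two distinct rationalizing distributions, then there exist two rationalizing distributions with different supports. -/
import Mathlib


open Finset
open scoped Classical

/-- A linear order on a finite set `α`, encoded as a ranking bijection to `Fin (card α)`;
higher value means more preferred. -/
abbrev RankOrd (α : Type*) [Fintype α] := α ≃ Fin (Fintype.card α)

variable {α : Type*} [Fintype α] [DecidableEq α]

/-- `ν` is a probability distribution over linear orders. -/
def IsDist [Fintype α] (ν : RankOrd α → ℝ) : Prop :=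
  (∀ π, 0 ≤ ν π) ∧ ∑ π : RankOrd α, ν π = 1

/-- The choice probabilities induced by a distribution over linear orders. -/
noncomputable def choiceProb (ν : RankOrd α → ℝ) (A : Finset α) (x : α) : ℝ :=
  ∑ π : RankOrd α, if ∀ y ∈ A, y ≠ x → (π y : ℕ) < (π x : ℕ) then ν π else 0

/-- `ν` rationalizes the system of choice probabilities `P`. -/
def Rationalizes (ν : RankOrd α → ℝ) (P : Finset α → α → ℝ) : Prop :=
  IsDist ν ∧ ∀ A : Finset α, A.Nonempty → ∀ x ∈ A, P A x = choiceProb ν A x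

/-- The Block–Marschak polynomial `q(x,A)` of a system of choice probabilities `P`. -/
noncomputable def bm (P : Finset α → α → ℝ) (x : α) (A : Finset α) : ℝ :=
  ∑ A' ∈ Finset.univ.powerset.filter (fun A' => A ⊆ A'),
    (-1 : ℝ) ^ (A' \ A).card * P A' x

/-- A path: a maximal chain `X = A_0 ⊋ A_1 ⊋ ⋯ ⊋ A_{|X|} = ∅` decreasing by one element. -/
def IsPath (ρ : ℕ → Finset α) : Prop :=
  ρ 0 = Finset.univ ∧ ρ (Fintype.card α) = ∅ ∧
    ∀ i < Fintype.card α, ρ (i + 1) ⊆ ρ i ∧ (ρ i \ ρ (i + 1)).card = 1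

/-- A supported path: all Block–Marschak edge weights along it are strictly positive. -/
def SupportedPath (P : Finset α → α → ℝ) (ρ : ℕ → Finset α) : Prop :=
  IsPath ρ ∧ ∀ i < Fintype.card α, ∀ x ∈ ρ i \ ρ (i + 1), 0 < bm P x (ρ i)

/-- Two paths are branching: they agree on a consecutive block of nodes
`{i,…,j} ⊆ {1,…,|X|-1}` while differing at positions `i-1` and `j+1`. -/
def BranchingPair (ρ ρ' : ℕ → Finset α) : Prop :=
  ∃ i j, 1 ≤ i ∧ i ≤ j ∧ j ≤ Fintype.card α - 1 ∧
    ρ (i - 1) ≠ ρ' (i - 1) ∧ ρ (j + 1) ≠ ρ' (j + 1) ∧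
    ∀ m, i ≤ m → m ≤ j → ρ m = ρ' m

/-- The path associated with the linear order `π`: `A_i` is `X` minus the top `i` elements. -/
def pathOf (π : RankOrd α) : ℕ → Finset α :=
  fun i => Finset.univ.filter (fun w => (π w : ℕ) < Fintype.card α - i)

/-- The weak upper contour set of `x` according to `π`. -/
def upper (π : RankOrd α) (x : α) : Finset α :=
  Finset.univ.filter (fun w => (π x : ℕ) ≤ (π w : ℕ))

/-- `π ∈ M_{x,A}`: `π` ranks `X \ A` above `x` and `x` above `A \ {x}`. -/
def inM (π : RankOrd α) (x : α) (A : Finset α) : Prop :=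
  (∀ z, z ∉ A → (π x : ℕ) < (π z : ℕ)) ∧ ∀ y ∈ A, y ≠ x → (π y : ℕ) < (π x : ℕ)

/-- Theorem 3: every rationalizing distribution has the same support iff the system of
choice probabilities has a unique rationalizing distribution. -/
theorem same_support_iff_unique {α : Type*} [Fintype α] [DecidableEq α]
    (P : Finset α → α → ℝ) (hrat : ∃ ν : RankOrd α → ℝ, Rationalizes ν P) :
    (∀ ν₁ ν₂ : RankOrd α → ℝ, Rationalizes ν₁ P → Rationalizes ν₂ P →
      ∀ π, (0 < ν₁ π ↔ 0 < ν₂ π)) ↔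
    (∀ ν₁ ν₂ : RankOrd α → ℝ, Rationalizes ν₁ P → Rationalizes ν₂ P → ν₁ = ν₂) := by
  constructor
  · intro hsame ν₁ ν₂ h₁ h₂
    by_contra hne
    have hd : ∃ π, ν₂ π < ν₁ π := by
      by_contra h
      push_neg at h
      apply hne
      funext π
      have hsum : ∑ π : RankOrd α, (ν₂ π - ν₁ π) = 0 := by
        rw [Finset.sum_sub_distrib, h₁.1.2, h₂.1.2]; ring
      have := (Finset.sum_eq_zero_iff_of_nonneg
        (fun π _ => sub_nonneg.2 (h π))).1 hsum π (Finset.mem_univ π)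
      linarith
    set S := Finset.univ.filter (fun π : RankOrd α => ν₂ π < ν₁ π) with hS
    have hSne : S.Nonempty := ⟨hd.choose, by simp [hS, hd.choose_spec]⟩
    obtain ⟨π₀, hπ₀S, hπ₀⟩ := Finset.exists_mem_eq_inf' hSne
      (fun π => ν₁ π / (ν₁ π - ν₂ π))
    set t := S.inf' hSne (fun π => ν₁ π / (ν₁ π - ν₂ π)) with ht
    have hmemS : ∀ π ∈ S, ν₂ π < ν₁ π := by
      intro π hπ; simpa [hS] using hπ
    have hpos : ∀ π ∈ S, 0 < ν₁ π := by
      intro π hπ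
      have := h₂.1.1 π
      have := hmemS π hπ
      linarith
    have htpos : 0 < t := by
      rw [ht]
      apply (Finset.lt_inf'_iff hSne).2
      intro π hπ
      exact div_pos (hpos π hπ) (by have := hmemS π hπ; linarith)
    set ν₃ := fun π => ν₁ π + t * (ν₂ π - ν₁ π) with hν₃
    have h3nonneg : ∀ π, 0 ≤ ν₃ π := by
      intro π
      by_cases h : ν₂ π < ν₁ π
      · have hmem : π ∈ S := by simp [hS, h]
        have hle : t ≤ ν₁ π / (ν₁ π - ν₂ π) := Finset.inf'_le _ hmem
        have hsub : 0 < ν₁ π - ν₂ π := by linarith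
        rw [le_div_iff₀ hsub] at hle
        simp only [hν₃]; nlinarith
      · push_neg at h
        have := h₁.1.1 π
        simp only [hν₃]; nlinarith
    have h3 : Rationalizes ν₃ P := by
      refine ⟨⟨h3nonneg, ?_⟩, ?_⟩
      · simp only [hν₃]
        rw [Finset.sum_add_distrib, ← Finset.mul_sum, Finset.sum_sub_distrib,
          h₁.1.2, h₂.1.2]
        ring
      · intro A hA x hx
        have e : choiceProb ν₃ A x
            = choiceProb ν₁ A x + t * (choiceProb ν₂ A x - choiceProb ν₁ A x) := by
          simp only [choiceProb, ← Finset.sum_sub_distrib, Finset.mul_sum,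
            ← Finset.sum_add_distrib]
          apply Finset.sum_congr rfl
          intro π _
          simp only [hν₃]
          split_ifs <;> ring
        rw [e, ← h₁.2 A hA x hx, ← h₂.2 A hA x hx]; ring
    have hsub : ν₁ π₀ - ν₂ π₀ ≠ 0 := by
      have := hmemS π₀ hπ₀S; linarith
    have h30 : ν₃ π₀ = 0 := by
      show ν₁ π₀ + t * (ν₂ π₀ - ν₁ π₀) = 0
      rw [hπ₀]
      field_simp
      ring
    have := (hsame ν₁ ν₃ h₁ h3 π₀).1 (hpos π₀ hπ₀S)
    rw [h30] at this
    exact lt_irrefl 0 this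
  · intro huniq ν₁ ν₂ h₁ h₂ π
    rw [huniq ν₁ ν₂ h₁ h₂]
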